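/- arXiv:2204.08982 — 2 statements merged into one kernel-verified Lean document; each statement's English description precedes it below -/
import Mathlib

section
/- The only triple of the form (q, 3·2^p, q+2) with q, q+2, and p all prime is (11, 12, 13), i.e., if q and q+2 are prime and q+1 = 3·2^p with p prime, then p = 2 and q = 11. -/
theorem twin_primes_around_three_two_pow (q p : ℕ) (hq : Nat.Prime q)
    (hq2 : Nat.Prime (q + 2)) (hp : Nat.Prime p) (h : q + 1 = 3 * 2 ^ p) :
    p = 2 ∧ q = 11 := by
  rcases hp.eq_two_or_odd' with rfl | ⟨k, rfl⟩
  · constructor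
    · rfl
    · omega
  · exfalso
    rcases Nat.even_or_odd k with ⟨m, rfl⟩ | ⟨m, rfl⟩
    · -- p = 4m+1, q+1 = 6*16^m ≡ 1 mod 5, so 5 ∣ q
      have hpow : 2 ^ (2 * (m + m) + 1) = 2 * 16 ^ m := by
        rw [show 2 * (m + m) + 1 = 4 * m + 1 by ring, pow_succ']
        rw [pow_mul]; norm_num
      rw [hpow] at h
      have ht : 16 ^ m % 5 = 1 := by simp [Nat.pow_mod]
      have h5 : (5 : ℕ) ∣ q := by omega
      have hq5 : q = 5 := ((Nat.prime_dvd_prime_iff_eq (by norm_num) hq).mp h5).symm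
      subst hq5
      have : 16 ^ m = 1 := by omega
      have hm : m = 0 := by
        by_contra hm
        have : 16 ≤ 16 ^ m := Nat.le_self_pow hm 16
        omega
      subst hm
      exact Nat.not_prime_one (by simpa using hp)
    · -- p = 4m+3, q+1 = 24*16^m ≡ 4 mod 5, so 5 ∣ q+2
      have hpow : 2 ^ (2 * (2 * m + 1) + 1) = 8 * 16 ^ m := by
        rw [show 2 * (2 * m + 1) + 1 = 4 * m + 3 by ring, pow_add, pow_mul]
        ring
      rw [hpow] at h
      have ht : 16 ^ m % 5 = 1 := by simp [Nat.pow_mod]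
      have h5 : (5 : ℕ) ∣ q + 2 := by omega
      have hq5 : q + 2 = 5 := ((Nat.prime_dvd_prime_iff_eq (by norm_num) hq2).mp h5).symm
      have : (1:ℕ) ≤ 16 ^ m := Nat.one_le_pow _ _ (by norm_num)
      omega
end

section
/- There is no prime p and prime q and prime r with 2^p + 1 = q^r except p = 3, q = 3, r = 2 (i.e., 2^3 + 1 = 3^2). -/
theorem catalan_eight_nine (p q r : ℕ) (hp : Nat.Prime p) (hq : Nat.Prime q)
    (hr : Nat.Prime r) (h : 2 ^ p + 1 = q ^ r) : p = 3 ∧ q = 3 ∧ r = 2 := by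
  have hp2 := hp.two_le
  have hq2 := hq.two_le
  have hr2le := hr.two_le
  -- q is odd
  have hqodd : q % 2 = 1 := by
    rcases hq.eq_two_or_odd with h2 | h1
    · exfalso
      subst h2
      have h1 : 2 ∣ 2 ^ p := dvd_pow_self 2 (by omega)
      have h2 : 2 ∣ 2 ^ r := dvd_pow_self 2 (by omega)
      omega
    · exact h1
  -- r = 2
  have hr2 : r = 2 := by
    rcases hr.eq_two_or_odd' with h2 | hodd
    · exact h2
    · exfalso
      set S : ℕ := ∑ i ∈ Finset.range r, q ^ i with hS
      have key : (S : ℤ) * ((q : ℤ) - 1) = 2 ^ p := by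
        have hg := geom_sum_mul (q : ℤ) r
        have hqr : ((q : ℤ)) ^ r = 2 ^ p + 1 := by exact_mod_cast h.symm
        rw [hS]
        push_cast
        rw [hg, hqr]
        ring
      have hdvd : S ∣ 2 ^ p := by
        have : (S : ℤ) ∣ (2 : ℤ) ^ p := ⟨(q : ℤ) - 1, key.symm⟩
        exact_mod_cast this
      obtain ⟨k, hk, hke⟩ := (Nat.dvd_prime_pow Nat.prime_two).mp hdvd
      have hSodd : S % 2 = 1 := by
        have hterm : ∀ i ∈ Finset.range r, q ^ i % 2 = 1 % 2 := by
          intro i _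
          rw [Nat.pow_mod, hqodd, one_pow]
        rw [hS, Finset.sum_nat_mod, Finset.sum_congr rfl hterm]
        simp only [Nat.one_mod]
        rw [Finset.sum_const, Finset.card_range, smul_eq_mul, mul_one]
        exact Nat.odd_iff.mp hodd
      have hk0 : k = 0 := by
        by_contra hk0
        have : 2 ∣ 2 ^ k := dvd_pow_self 2 hk0
        omega
      have hS1 : S = 1 := by rw [hke, hk0, pow_zero]
      have hqle : q ^ 1 ≤ S := by
        apply Finset.single_le_sum (f := fun i => q ^ i)
        · intro i _; positivity
        · simp; omega
      simp at hqle
      omega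
  -- now 2^p + 1 = q^2
  subst hr2
  obtain ⟨m, rfl⟩ : ∃ m, q = m + 2 := ⟨q - 2, by omega⟩
  have key : (m + 1) * (m + 3) = 2 ^ p := by ring_nf; ring_nf at h; omega
  obtain ⟨a, ha, hae⟩ := (Nat.dvd_prime_pow Nat.prime_two).mp
    (⟨m + 3, key.symm⟩ : (m + 1) ∣ 2 ^ p)
  obtain ⟨b, hb, hbe⟩ := (Nat.dvd_prime_pow Nat.prime_two).mp
    (⟨m + 1, by rw [mul_comm]; exact key.symm⟩ : (m + 3) ∣ 2 ^ p)
  have hmodd : m % 2 = 1 := by omega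
  have ha1 : 1 ≤ a := by
    by_contra hc
    interval_cases a
    omega
  have hb2 : 2 ≤ b := by
    rcases Nat.lt_or_ge b 2 with hlt | hge
    · exfalso; interval_cases b <;> omega
    · exact hge
  -- 2^b = 2^a + 2
  have heq : 2 ^ b = 2 ^ a + 2 := by omega
  have ha1' : a = 1 := by
    by_contra hc
    have ha2 : 2 ≤ a := by omega
    have h4a : 4 ∣ 2 ^ a := by
      have : (2:ℕ) ^ 2 ∣ 2 ^ a := pow_dvd_pow 2 ha2
      simpa using this
    have h4b : 4 ∣ 2 ^ b := by
      have : (2:ℕ) ^ 2 ∣ 2 ^ b := pow_dvd_pow 2 hb2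
      simpa using this
    omega
  have hb2' : b = 2 := by
    by_contra hc
    have hb3 : 3 ≤ b := by omega
    have h8b : 8 ∣ 2 ^ b := by
      have : (2:ℕ) ^ 3 ∣ 2 ^ b := pow_dvd_pow 2 hb3
      simpa using this
    rw [ha1'] at heq
    omega
  rw [ha1'] at hae
  have hm1 : m = 1 := by omega
  subst hm1
  have hp3 : 2 ^ p = 2 ^ 3 := by omega
  have : p = 3 := Nat.pow_right_injective (by norm_num) hp3
  exact ⟨this, rfl, rfl⟩
end
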